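/- arXiv:1509.00839 — 2 statements merged into one kernel-verified Lean document; each statement's English description precedes it below -/
import Mathlib

section
/- Let G be a finite group of order n and f₁, f₂ : G → {0,1} sceneries. If their multispectra agree, i.e., A_{f₁}(x₁,...,x_n) = A_{f₂}(x₁,...,x_n) for all x₁,...,x_n ∈ G, then f₁ is a shift of f₂: there exists g ∈ G such that f₁(k) = f₂(kg) for all k ∈ G. -/
open BigOperators

def extFin {G : Type*} [Group G] {N : ℕ} (z : Fin N → G) : ℕ → G :=
  fun i => if h : i < N then z ⟨i, h⟩ else 1

def cumProd {G : Type*} [Group G] {n : ℕ} (x : Fin n → G) : ℕ → G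
  | 0 => 1
  | (j + 1) => extFin x j * cumProd x j

lemma cumProd_spec {G : Type*} [Group G] {n : ℕ} (d : ℕ → G) (hd0 : d 0 = 1) :
    ∀ j, j ≤ n → cumProd (fun i : Fin n => d (i + 1) * (d i)⁻¹) j = d j := by
  intro j
  induction j with
  | zero => intro _; simpa [cumProd] using hd0.symm
  | succ j ih =>
    intro hj
    have hjn : j < n := hj
    have ihj := ih (le_of_lt hjn)
    simp only [cumProd, extFin, hjn, dif_pos, ihj]
    group

/-- if two sceneries on `G` have the same `|G|`-fold
multispectrum, then one is a (right) shift of the other. -/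
theorem multispectrum_determines_scenery {G : Type*} [Group G] [Fintype G]
    (f₁ f₂ : G → ℝ) (hf₁ : ∀ k, f₁ k = 0 ∨ f₁ k = 1) (hf₂ : ∀ k, f₂ k = 0 ∨ f₂ k = 1)
    (hA : ∀ x : Fin (Fintype.card G) → G,
      (∑ k : G, f₁ k * ∏ j : Fin (Fintype.card G), f₁ (cumProd x (j + 1) * k))
        = ∑ k : G, f₂ k * ∏ j : Fin (Fintype.card G), f₂ (cumProd x (j + 1) * k)) :
    ∃ g : G, ∀ k : G, f₁ k = f₂ (k * g) := by
  classical
  have h1nn : ∀ k, 0 ≤ f₁ k := fun k => by rcases hf₁ k with h | h <;> simp [h]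
  have h2nn : ∀ k, 0 ≤ f₂ k := fun k => by rcases hf₂ k with h | h <;> simp [h]
  -- the spectra agree for arbitrary sequences of partial products
  have key : ∀ q : Fin (Fintype.card G) → G,
      (∑ k : G, f₁ k * ∏ j : Fin (Fintype.card G), f₁ (q j * k))
        = ∑ k : G, f₂ k * ∏ j : Fin (Fintype.card G), f₂ (q j * k) := by
    intro q
    set d : ℕ → G := fun i => match i with | 0 => 1 | (i + 1) => extFin q i with hd
    have hcp : ∀ j : Fin (Fintype.card G),
        cumProd (fun i : Fin (Fintype.card G) => d (i + 1) * (d i)⁻¹) ((j : ℕ) + 1) = q j := by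
      intro j
      rw [cumProd_spec d rfl ((j : ℕ) + 1) (by omega)]
      simp [hd, extFin, j.isLt]
    have h := hA (fun i : Fin (Fintype.card G) => d (i + 1) * (d i)⁻¹)
    simpa only [hcp] using h
  -- the two supports have the same total mass
  have hsum : ∑ k : G, f₁ k = ∑ k : G, f₂ k := by
    have h := key (fun _ => 1)
    simp only [one_mul, Finset.prod_const, Finset.card_univ, Fintype.card_fin] at h
    have e1 : ∀ (f : G → ℝ), (∀ k, f k = 0 ∨ f k = 1) →
        ∑ k : G, f k = ∑ k : G, f k * f k ^ (Fintype.card G) := by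
      intro f hf
      refine Finset.sum_congr rfl fun k _ => ?_
      rcases hf k with hk | hk <;> simp [hk]
    rw [e1 f₁ hf₁, e1 f₂ hf₂]
    exact h
  by_cases hS1 : ∀ k, f₁ k = 0
  · -- both sceneries are identically zero
    refine ⟨1, fun k => ?_⟩
    have hz : ∑ k : G, f₂ k = 0 := by rw [← hsum]; simp [hS1]
    have hz2 : ∀ k ∈ (Finset.univ : Finset G), f₂ k = 0 :=
      (Finset.sum_eq_zero_iff_of_nonneg (fun k _ => h2nn k)).1 hz
    rw [hS1 k, hz2 (k * 1) (Finset.mem_univ _)]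
  · push_neg at hS1
    obtain ⟨s, hs0⟩ := hS1
    have hs : f₁ s = 1 := (hf₁ s).resolve_left hs0
    set e : Fin (Fintype.card G) → G := fun j => (Fintype.equivFin G).symm j with he
    set q : Fin (Fintype.card G) → G :=
      fun j => if f₁ (e j) = 1 then e j * s⁻¹ else 1 with hq
    have hq1 : ∀ j, f₁ (q j * s) = 1 := by
      intro j
      by_cases hj : f₁ (e j) = 1
      · simp [hq, hj]
      · simp [hq, hj, hs]
    -- the f₁-sum is positive
    have hterm : f₁ s * ∏ j : Fin (Fintype.card G), f₁ (q j * s) = 1 := by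
      simp [hs, hq1]
    have hpos1 : (0 : ℝ) <
        ∑ k : G, f₁ k * ∏ j : Fin (Fintype.card G), f₁ (q j * k) := by
      have hle : (1 : ℝ) ≤ ∑ k : G, f₁ k * ∏ j : Fin (Fintype.card G), f₁ (q j * k) := by
        rw [← hterm]
        refine Finset.single_le_sum (f := fun k : G => f₁ k * ∏ j : Fin (Fintype.card G), f₁ (q j * k)) (fun k _ => ?_) (Finset.mem_univ s)
        exact mul_nonneg (h1nn k) (Finset.prod_nonneg fun j _ => h1nn _)
      linarith
    have hpos2 : (0 : ℝ) <
        ∑ k : G, f₂ k * ∏ j : Fin (Fintype.card G), f₂ (q j * k) := by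
      rw [← key q]; exact hpos1
    -- extract a witness k₀ from positivity of the f₂-sum
    have hex : ∃ k₀ : G, f₂ k₀ * ∏ j : Fin (Fintype.card G), f₂ (q j * k₀) ≠ 0 := by
      by_contra hc
      push_neg at hc
      have : ∑ k : G, f₂ k * ∏ j : Fin (Fintype.card G), f₂ (q j * k) = 0 :=
        Finset.sum_eq_zero fun k _ => hc k
      rw [this] at hpos2
      exact lt_irrefl 0 hpos2
    obtain ⟨k₀, hk₀⟩ := hex
    have hk₀1 : f₂ k₀ = 1 := (hf₂ k₀).resolve_left (left_ne_zero_of_mul hk₀)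
    have hk₀2 : ∀ j, f₂ (q j * k₀) = 1 := by
      intro j
      have hpne : (∏ j : Fin (Fintype.card G), f₂ (q j * k₀)) ≠ 0 := right_ne_zero_of_mul hk₀
      have := Finset.prod_ne_zero_iff.1 hpne j (Finset.mem_univ j)
      exact (hf₂ _).resolve_left this
    -- forward direction: f₁ k = 1 → f₂ (k * (s⁻¹ * k₀)) = 1
    have hfwd : ∀ k : G, f₁ k = 1 → f₂ (k * (s⁻¹ * k₀)) = 1 := by
      intro k hk
      have hj : e ((Fintype.equivFin G) k) = k := by simp [he]
      have := hk₀2 ((Fintype.equivFin G) k)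
      rw [hq] at this
      simp only [hj, hk, if_pos] at this
      rw [← mul_assoc]
      simpa [mul_assoc] using this
    -- cardinality argument for the converse
    set φ : G → G := fun k => k * (s⁻¹ * k₀) with hφ
    have hφinj : Function.Injective φ := fun a b h => by
      simpa [hφ] using mul_right_cancel h
    set S₁ : Finset G := Finset.univ.filter (fun k => f₁ k = 1) with hS₁
    set S₂ : Finset G := Finset.univ.filter (fun k => f₂ k = 1) with hS₂
    have hcard : ∀ (f : G → ℝ), (∀ k, f k = 0 ∨ f k = 1) →
        ∑ k : G, f k = ((Finset.univ.filter (fun k => f k = 1)).card : ℝ) := by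
      intro f hf
      rw [← Finset.sum_boole]
      refine Finset.sum_congr rfl fun k _ => ?_
      rcases hf k with hk | hk <;> simp [hk]
    have hScard : S₁.card = S₂.card := by
      have := hsum
      rw [hcard f₁ hf₁, hcard f₂ hf₂] at this
      exact_mod_cast this
    have himg : S₁.image φ ⊆ S₂ := by
      intro a ha
      obtain ⟨k, hk, rfl⟩ := Finset.mem_image.1 ha
      have hk1 : f₁ k = 1 := (Finset.mem_filter.1 hk).2
      exact Finset.mem_filter.2 ⟨Finset.mem_univ _, hfwd k hk1⟩
    have heq : S₁.image φ = S₂ := by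
      refine Finset.eq_of_subset_of_card_le himg ?_
      rw [Finset.card_image_of_injective _ hφinj, hScard]
    refine ⟨s⁻¹ * k₀, fun k => ?_⟩
    rcases hf₁ k with hk | hk
    · rcases hf₂ (k * (s⁻¹ * k₀)) with hk2 | hk2
      · rw [hk, hk2]
      · exfalso
        have hmem : φ k ∈ S₂ := Finset.mem_filter.2 ⟨Finset.mem_univ _, hk2⟩
        rw [← heq] at hmem
        obtain ⟨k', hk', hkk'⟩ := Finset.mem_image.1 hmem
        have : k' = k := hφinj hkk'
        rw [this] at hk'
        have : f₁ k = 1 := (Finset.mem_filter.1 hk').2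
        rw [hk] at this
        norm_num at this
    · rw [hk, hfwd k hk]
end

section
/- Let G be a finite non-abelian group of order n and let γ be any probability distribution on G. Then there exists a function J_n : Gⁿ → ℂ, not identically zero, such that for all positive integers ℓ₁,...,ℓ_n, ∑ d_{ρ₁}···d_{ρ_n} Tr((γ̂(ρ₁)^{ℓ₁} ⊗ ··· ⊗ γ̂(ρ_n)^{ℓ_n}) Ĵ_n(ρ₁ ⊗ ··· ⊗ ρ_n)) = 0, where the sum ranges over all n-tuples of irreducible representations of G up to equivalence. In other words, no random walk on a finite non-abelian group satisfies the multispectral reconstruction condition. -/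
open Matrix BigOperators

noncomputable def matFT {G : Type*} [Group G] [Fintype G] {d : ℕ} (f : G → ℂ)
    (ρ : G →* Matrix (Fin d) (Fin d) ℂ) : Matrix (Fin d) (Fin d) ℂ :=
  ∑ s : G, f s • ρ s

def MatRepIrreducible {G : Type*} [Group G] {d : ℕ}
    (ρ : G →* Matrix (Fin d) (Fin d) ℂ) : Prop :=
  0 < d ∧ ∀ W : Submodule ℂ (Fin d → ℂ),
    (∀ s : G, W.map (Matrix.toLin' (ρ s)) ≤ W) → W = ⊥ ∨ W = ⊤

def MatRepEquiv {G : Type*} [Group G] {d₁ d₂ : ℕ}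
    (ρ₁ : G →* Matrix (Fin d₁) (Fin d₁) ℂ)
    (ρ₂ : G →* Matrix (Fin d₂) (Fin d₂) ℂ) : Prop :=
  ∃ e : (Fin d₁ → ℂ) ≃ₗ[ℂ] (Fin d₂ → ℂ),
    ∀ s : G, (e.toLinearMap ∘ₗ Matrix.toLin' (ρ₁ s)) = (Matrix.toLin' (ρ₂ s) ∘ₗ e.toLinearMap)

/-- The `n`-fold Kronecker product realized on the index type `Π i, Fin (d i)`. -/
def kronPi {κ : Type*} [Fintype κ] {d : κ → ℕ}
    (M : ∀ i, Matrix (Fin (d i)) (Fin (d i)) ℂ) :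
    Matrix (∀ i, Fin (d i)) (∀ i, Fin (d i)) ℂ :=
  fun a b => ∏ i, M i (a i) (b i)

section Schur

variable {G : Type*} [Group G] [Fintype G]

lemma schur_basic {d₁ d₂ : ℕ}
    (ρ₁ : G →* Matrix (Fin d₁) (Fin d₁) ℂ) (ρ₂ : G →* Matrix (Fin d₂) (Fin d₂) ℂ)
    (h1 : MatRepIrreducible ρ₁) (h2 : MatRepIrreducible ρ₂)
    (T : Matrix (Fin d₂) (Fin d₁) ℂ) (hT : ∀ s, T * ρ₁ s = ρ₂ s * T) :
    T = 0 ∨ Function.Bijective (Matrix.toLin' T) := by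
  by_cases hT0 : T = 0
  · exact Or.inl hT0
  right
  have hcomm : ∀ s, (Matrix.toLin' T) ∘ₗ (Matrix.toLin' (ρ₁ s))
      = (Matrix.toLin' (ρ₂ s)) ∘ₗ (Matrix.toLin' T) := by
    intro s
    rw [← Matrix.toLin'_mul, ← Matrix.toLin'_mul, hT s]
  have hcomm' : ∀ s v, Matrix.toLin' T (Matrix.toLin' (ρ₁ s) v)
      = Matrix.toLin' (ρ₂ s) (Matrix.toLin' T v) := by
    intro s v
    exact congrFun (congrArg (fun (f : (Fin d₁ → ℂ) →ₗ[ℂ] (Fin d₂ → ℂ)) => ⇑f) (hcomm s)) v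
  have hL0 : Matrix.toLin' T ≠ 0 := by
    intro h
    exact hT0 (Matrix.toLin'.injective (by rw [h, map_zero]))
  have hkinv : ∀ s : G, (LinearMap.ker (Matrix.toLin' T)).map (Matrix.toLin' (ρ₁ s))
      ≤ LinearMap.ker (Matrix.toLin' T) := by
    intro s x hx
    rcases Submodule.mem_map.mp hx with ⟨y, hy, rfl⟩
    simp only [LinearMap.mem_ker] at hy ⊢
    rw [hcomm' s y, hy, map_zero]
  have hrinv : ∀ s : G, (LinearMap.range (Matrix.toLin' T)).map (Matrix.toLin' (ρ₂ s))
      ≤ LinearMap.range (Matrix.toLin' T) := by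
    intro s x hx
    rcases Submodule.mem_map.mp hx with ⟨y, hy, rfl⟩
    rcases LinearMap.mem_range.mp hy with ⟨z, rfl⟩
    exact LinearMap.mem_range.mpr ⟨Matrix.toLin' (ρ₁ s) z, (hcomm' s z).symm ▸ rfl⟩
  have hker : LinearMap.ker (Matrix.toLin' T) = ⊥ := by
    rcases h1.2 _ hkinv with h | h
    · exact h
    · exact absurd (LinearMap.ker_eq_top.mp h) hL0
  have hrange : LinearMap.range (Matrix.toLin' T) = ⊤ := by
    rcases h2.2 _ hrinv with h | h
    · exact absurd (LinearMap.range_eq_bot.mp h) hL0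
    · exact h
  exact ⟨LinearMap.ker_eq_bot.mp hker, LinearMap.range_eq_top.mp hrange⟩

lemma schur_equiv {d₁ d₂ : ℕ}
    (ρ₁ : G →* Matrix (Fin d₁) (Fin d₁) ℂ) (ρ₂ : G →* Matrix (Fin d₂) (Fin d₂) ℂ)
    (h1 : MatRepIrreducible ρ₁) (h2 : MatRepIrreducible ρ₂)
    (hne : ¬ MatRepEquiv ρ₁ ρ₂)
    (T : Matrix (Fin d₂) (Fin d₁) ℂ) (hT : ∀ s, T * ρ₁ s = ρ₂ s * T) :
    T = 0 := by
  rcases schur_basic ρ₁ ρ₂ h1 h2 T hT with h | h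
  · exact h
  exfalso
  apply hne
  refine ⟨LinearEquiv.ofBijective (Matrix.toLin' T) h, fun s => ?_⟩
  have heq : (LinearEquiv.ofBijective (Matrix.toLin' T) h).toLinearMap
      = Matrix.toLin' T := rfl
  rw [heq, ← Matrix.toLin'_mul, ← Matrix.toLin'_mul, hT s]

lemma schur_endo {d : ℕ}
    (ρ₁ : G →* Matrix (Fin d) (Fin d) ℂ) (h1 : MatRepIrreducible ρ₁)
    (T : Matrix (Fin d) (Fin d) ℂ) (hT : ∀ s, T * ρ₁ s = ρ₁ s * T) :
    T = (Matrix.trace T / d) • 1 := by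
  haveI : Nonempty (Fin d) := Fin.pos_iff_nonempty.mp h1.1
  have hd : (d : ℂ) ≠ 0 := Nat.cast_ne_zero.mpr h1.1.ne'
  obtain ⟨μ, hμ⟩ := Module.End.exists_eigenvalue
    (Matrix.toLin' T : Module.End ℂ (Fin d → ℂ))
  obtain ⟨v, hv⟩ := hμ.exists_hasEigenvector
  have hT' : ∀ s, (T - μ • 1) * ρ₁ s = ρ₁ s * (T - μ • 1) := by
    intro s
    simp only [Matrix.sub_mul, Matrix.mul_sub, hT s, Matrix.smul_mul, Matrix.mul_smul,
      Matrix.one_mul, Matrix.mul_one]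
  have hker : Matrix.toLin' (T - μ • 1) v = 0 := by
    have h1v : Matrix.toLin' T v = μ • v := hv.apply_eq_smul
    have h2v : Matrix.toLin' ((μ : ℂ) • (1 : Matrix (Fin d) (Fin d) ℂ)) v = μ • v := by
      simp [Matrix.toLin'_one]
    rw [map_sub, LinearMap.sub_apply, h1v, h2v, sub_self]
  have hTμ : T = μ • 1 := by
    rcases schur_basic ρ₁ ρ₁ h1 h1 (T - μ • 1) hT' with h | h
    · rwa [sub_eq_zero] at h
    · exfalso
      have h0 : Matrix.toLin' (T - μ • 1) v = Matrix.toLin' (T - μ • 1) 0 := by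
        rw [hker, map_zero]
      exact hv.right (h.injective h0)
  have htr : Matrix.trace T = μ * d := by
    rw [hTμ, Matrix.trace_smul, Matrix.trace_one, smul_eq_mul]
    simp [Fintype.card_fin]
  rw [htr]
  rw [mul_div_assoc, div_self hd, mul_one]
  exact hTμ

noncomputable def twist {d₁ d₂ : ℕ}
    (ρ₁ : G →* Matrix (Fin d₁) (Fin d₁) ℂ) (ρ₂ : G →* Matrix (Fin d₂) (Fin d₂) ℂ)
    (M : Matrix (Fin d₂) (Fin d₁) ℂ) : Matrix (Fin d₂) (Fin d₁) ℂ :=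
  ∑ s : G, ρ₂ s⁻¹ * M * ρ₁ s

lemma twist_intertwines {d₁ d₂ : ℕ}
    (ρ₁ : G →* Matrix (Fin d₁) (Fin d₁) ℂ) (ρ₂ : G →* Matrix (Fin d₂) (Fin d₂) ℂ)
    (M : Matrix (Fin d₂) (Fin d₁) ℂ) (t : G) :
    twist ρ₁ ρ₂ M * ρ₁ t = ρ₂ t * twist ρ₁ ρ₂ M := by
  unfold twist
  rw [Matrix.sum_mul, Matrix.mul_sum]
  refine Fintype.sum_equiv (Equiv.mulRight t) _ _ (fun s => ?_)
  simp only [Equiv.coe_mulRight, _root_.mul_inv_rev, _root_.map_mul, Matrix.mul_assoc]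
  rw [← Matrix.mul_assoc (ρ₂ t) (ρ₂ t⁻¹), ← _root_.map_mul ρ₂ t t⁻¹, mul_inv_cancel,
    _root_.map_one, Matrix.one_mul]

lemma twist_trace {d : ℕ}
    (ρ₁ : G →* Matrix (Fin d) (Fin d) ℂ) (M : Matrix (Fin d) (Fin d) ℂ) :
    Matrix.trace (twist ρ₁ ρ₁ M) = (Fintype.card G : ℂ) * Matrix.trace M := by
  unfold twist
  rw [Matrix.trace_sum]
  have : ∀ s : G, Matrix.trace (ρ₁ s⁻¹ * M * ρ₁ s) = Matrix.trace M := by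
    intro s
    rw [Matrix.trace_mul_comm, ← Matrix.mul_assoc, ← _root_.map_mul, mul_inv_cancel, _root_.map_one,
      Matrix.one_mul]
  simp only [this, Finset.sum_const, Finset.card_univ, nsmul_eq_mul]

lemma twist_endo_eq {d : ℕ}
    (ρ₁ : G →* Matrix (Fin d) (Fin d) ℂ) (h1 : MatRepIrreducible ρ₁)
    (M : Matrix (Fin d) (Fin d) ℂ) :
    twist ρ₁ ρ₁ M = ((Fintype.card G : ℂ) * Matrix.trace M / d) • 1 := by
  have := schur_endo ρ₁ h1 (twist ρ₁ ρ₁ M) (twist_intertwines ρ₁ ρ₁ M)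
  rwa [twist_trace] at this

lemma twist_single_entry {d₁ d₂ : ℕ}
    (ρ₁ : G →* Matrix (Fin d₁) (Fin d₁) ℂ) (ρ₂ : G →* Matrix (Fin d₂) (Fin d₂) ℂ)
    (q p : Fin d₂) (j k : Fin d₁) :
    twist ρ₁ ρ₂ (Matrix.single q j (1 : ℂ)) p k = ∑ s : G, ρ₂ s⁻¹ p q * ρ₁ s j k := by
  unfold twist
  rw [Matrix.sum_apply]
  refine Finset.sum_congr rfl (fun s _ => ?_)
  rw [Matrix.mul_apply]
  have hrow : ∀ β, (ρ₂ s⁻¹ * Matrix.single q j (1 : ℂ)) p β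
      = ρ₂ s⁻¹ p q * (if β = j then 1 else 0) := by
    intro β
    rw [Matrix.mul_apply]
    have hterm : ∀ α, ρ₂ s⁻¹ p α * Matrix.single q j (1:ℂ) α β
        = if α = q then (if β = j then ρ₂ s⁻¹ p q else 0) else 0 := by
      intro α
      simp only [Matrix.single, Matrix.of_apply]
      by_cases h1 : α = q
      · subst h1
        by_cases h2 : β = j
        · subst h2; simp
        · simp [h2, (Ne.symm h2 : j ≠ β)]
      · simp [h1, (Ne.symm h1 : q ≠ α)]
    simp only [hterm, Finset.sum_ite_eq', Finset.mem_univ, if_true]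
    by_cases h2 : β = j <;> simp [h2]
  simp only [hrow]
  have hsum : ∀ β, ρ₂ s⁻¹ p q * (if β = j then (1:ℂ) else 0) * ρ₁ s β k
      = if β = j then ρ₂ s⁻¹ p q * ρ₁ s j k else 0 := by
    intro β; by_cases hβ : β = j <;> simp [hβ]
  simp only [hsum]
  simp

lemma C_entry {d₁ d₂ : ℕ}
    (ρ₁ : G →* Matrix (Fin d₁) (Fin d₁) ℂ) (ρ₂ : G →* Matrix (Fin d₂) (Fin d₂) ℂ)
    (N : Matrix (Fin d₁) (Fin d₁) ℂ) (p q : Fin d₂) :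
    (∑ s : G, Matrix.trace (N * ρ₁ s) • ρ₂ s⁻¹) p q
      = ∑ k : Fin d₁, ∑ j : Fin d₁,
          N k j * twist ρ₁ ρ₂ (Matrix.single q j (1:ℂ)) p k := by
  rw [Matrix.sum_apply]
  have hterm : ∀ s : G, (Matrix.trace (N * ρ₁ s) • ρ₂ s⁻¹) p q
      = ∑ k : Fin d₁, ∑ j : Fin d₁, N k j * (ρ₂ s⁻¹ p q * ρ₁ s j k) := by
    intro s
    rw [Matrix.smul_apply, smul_eq_mul, Matrix.trace]
    simp only [Matrix.diag_apply, Matrix.mul_apply, Finset.sum_mul]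
    refine Finset.sum_congr rfl (fun k _ => ?_)
    refine Finset.sum_congr rfl (fun j _ => ?_)
    ring
  simp only [hterm]
  rw [Finset.sum_comm]
  refine Finset.sum_congr rfl (fun k _ => ?_)
  rw [Finset.sum_comm]
  refine Finset.sum_congr rfl (fun j _ => ?_)
  rw [twist_single_entry, Finset.mul_sum]

lemma C_ne {d₁ d₂ : ℕ}
    (ρ₁ : G →* Matrix (Fin d₁) (Fin d₁) ℂ) (ρ₂ : G →* Matrix (Fin d₂) (Fin d₂) ℂ)
    (h1 : MatRepIrreducible ρ₁) (h2 : MatRepIrreducible ρ₂)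
    (hne : ¬ MatRepEquiv ρ₁ ρ₂) (N : Matrix (Fin d₁) (Fin d₁) ℂ) :
    ∑ s : G, Matrix.trace (N * ρ₁ s) • ρ₂ s⁻¹ = 0 := by
  ext p q
  rw [C_entry]
  have h0 : ∀ M, twist ρ₁ ρ₂ M = 0 :=
    fun M => schur_equiv ρ₁ ρ₂ h1 h2 hne _ (twist_intertwines ρ₁ ρ₂ M)
  simp [h0]

lemma trace_std : ∀ {d : ℕ} (q j : Fin d), Matrix.trace (Matrix.single q j (1:ℂ))
    = if q = j then 1 else 0 := by
  intro d q j
  rw [Matrix.trace]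
  by_cases h : q = j
  · subst h
    simp [Matrix.single, Matrix.diag]
  · simp only [Matrix.diag_apply, Matrix.single, Matrix.of_apply]
    rw [Finset.sum_eq_zero, if_neg h]
    intro i _
    rw [if_neg]
    rintro ⟨rfl, rfl⟩
    exact h rfl

lemma C_self {d : ℕ}
    (ρ₁ : G →* Matrix (Fin d) (Fin d) ℂ) (h1 : MatRepIrreducible ρ₁)
    (N : Matrix (Fin d) (Fin d) ℂ) :
    ∑ s : G, Matrix.trace (N * ρ₁ s) • ρ₁ s⁻¹ = ((Fintype.card G : ℂ) / d) • N := by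
  ext p q
  rw [C_entry]
  simp only [twist_endo_eq ρ₁ h1, trace_std]
  have hterm : ∀ k j : Fin d,
      N k j * (((Fintype.card G : ℂ) * (if q = j then (1:ℂ) else 0) / d) •
        (1 : Matrix (Fin d) (Fin d) ℂ)) p k
      = if k = p then (if j = q then ((Fintype.card G : ℂ) / d) * N k j else 0) else 0 := by
    intro k j
    rw [Matrix.smul_apply, Matrix.one_apply, smul_eq_mul]
    by_cases h1' : k = p
    · subst h1'
      by_cases h2 : j = q
      · subst h2; simp; ring
      · simp [h2, (Ne.symm h2 : q ≠ j)]
    · simp [h1', (Ne.symm h1' : p ≠ k)]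
  simp only [hterm]
  rw [Finset.sum_comm]
  simp only [Finset.sum_ite_eq', Finset.mem_univ, if_true]
  simp

lemma phi_inj {ι : Type*} [Fintype ι] (dd : ι → ℕ)
    (ρ : ∀ i : ι, G →* Matrix (Fin (dd i)) (Fin (dd i)) ℂ)
    (hirr : ∀ i, MatRepIrreducible (ρ i))
    (hinequiv : ∀ i j, i ≠ j → ¬ MatRepEquiv (ρ i) (ρ j))
    (M : ∀ i, Matrix (Fin (dd i)) (Fin (dd i)) ℂ)
    (hM : ∀ s : G, ∑ i, (dd i : ℂ) * Matrix.trace (M i * ρ i s) = 0) :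
    M = 0 := by
  funext i'
  have hcard : (Fintype.card G : ℂ) ≠ 0 :=
    Nat.cast_ne_zero.mpr Fintype.card_ne_zero
  have hd : (dd i' : ℂ) ≠ 0 := Nat.cast_ne_zero.mpr (hirr i').1.ne'
  have h0 : (0 : Matrix (Fin (dd i')) (Fin (dd i')) ℂ)
      = ∑ s : G, (∑ i, (dd i : ℂ) * Matrix.trace (M i * ρ i s)) • ρ i' s⁻¹ := by
    rw [Finset.sum_eq_zero]
    intro s _
    rw [hM s, zero_smul]
  have h1 : ∑ s : G, (∑ i, (dd i : ℂ) * Matrix.trace (M i * ρ i s)) • ρ i' s⁻¹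
      = ∑ i, (dd i : ℂ) • ∑ s : G, Matrix.trace (M i * ρ i s) • ρ i' s⁻¹ := by
    simp only [Finset.sum_smul]
    rw [Finset.sum_comm]
    refine Finset.sum_congr rfl (fun i _ => ?_)
    rw [Finset.smul_sum]
    refine Finset.sum_congr rfl (fun s _ => ?_)
    rw [mul_smul]
  have h2 : ∑ i, (dd i : ℂ) • ∑ s : G, Matrix.trace (M i * ρ i s) • ρ i' s⁻¹
      = (dd i' : ℂ) • (((Fintype.card G : ℂ) / dd i') • M i') := by
    rw [Finset.sum_eq_single i']
    · rw [C_self (ρ i') (hirr i')]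
    · intro i _ hne
      rw [C_ne (ρ i) (ρ i') (hirr i) (hirr i') (hinequiv i i' hne), smul_zero]
    · intro h
      exact absurd (Finset.mem_univ i') h
  have h3 : (0 : Matrix (Fin (dd i')) (Fin (dd i')) ℂ) = (Fintype.card G : ℂ) • M i' := by
    rw [h0, h1, h2, smul_smul, mul_div_assoc', mul_comm, mul_div_assoc, div_self hd, mul_one]
  have := h3.symm
  rw [smul_eq_zero] at this
  rcases this with h | h
  · exact absurd h hcard
  · exact h

open Polynomial in
lemma pow_mem_span_pow {R : Type*} [Ring R] [Algebra ℂ R] (A : R) (p : ℂ[X])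
    (hm : p.Monic) (hp : Polynomial.aeval A p = 0) (hD : 1 ≤ p.natDegree) :
    ∀ ℓ : ℕ, 1 ≤ ℓ →
      A ^ ℓ ∈ Submodule.span ℂ ((fun k => A ^ k) '' (Set.Icc 1 p.natDegree)) := by
  set D := p.natDegree with hDdef
  intro ℓ
  induction ℓ using Nat.strong_induction_on with
  | _ ℓ ih =>
    intro hℓ
    by_cases hle : ℓ ≤ D
    · exact Submodule.subset_span ⟨ℓ, ⟨hℓ, hle⟩, rfl⟩
    · push_neg at hle
      have hDA : A ^ D = ∑ k ∈ Finset.range D, (-(p.coeff k)) • A ^ k := by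
        have h0 : (0 : R) = ∑ i ∈ Finset.range (D + 1), p.coeff i • A ^ i := by
          rw [← Polynomial.aeval_eq_sum_range, hp]
        rw [Finset.sum_range_succ, hm.coeff_natDegree, one_smul] at h0
        have h' : A ^ D = -(∑ k ∈ Finset.range D, p.coeff k • A ^ k) := by
          rw [eq_neg_iff_add_eq_zero, add_comm]
          exact h0.symm
        rw [h', ← Finset.sum_neg_distrib]
        exact Finset.sum_congr rfl (fun k _ => (neg_smul _ _).symm)
      have hsplit : A ^ ℓ = ∑ k ∈ Finset.range D, (-(p.coeff k)) • A ^ (ℓ - D + k) := by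
        have : A ^ ℓ = A ^ (ℓ - D) * A ^ D := by
          rw [← pow_add]
          congr 1
          omega
        rw [this, hDA, Finset.mul_sum]
        refine Finset.sum_congr rfl (fun k _ => ?_)
        rw [mul_smul_comm, ← pow_add]
      rw [hsplit]
      refine Submodule.sum_mem _ (fun k hk => ?_)
      refine Submodule.smul_mem _ _ ?_
      refine ih (ℓ - D + k) ?_ ?_
      · rw [Finset.mem_range] at hk; omega
      · omega

noncomputable def PhiMap {ι : Type*} [Fintype ι] (dd : ι → ℕ)
    (ρ : ∀ i : ι, G →* Matrix (Fin (dd i)) (Fin (dd i)) ℂ) :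
    (∀ i, Matrix (Fin (dd i)) (Fin (dd i)) ℂ) →ₗ[ℂ] (G → ℂ) where
  toFun := fun M s => ∑ i, (dd i : ℂ) * Matrix.trace (M i * ρ i s)
  map_add' := by
    intro M N
    funext s
    simp [Matrix.add_mul, Matrix.trace_add, mul_add, Finset.sum_add_distrib]
  map_smul' := by
    intro cc M
    funext s
    simp [Matrix.smul_mul, Matrix.trace_smul, smul_eq_mul, Finset.mul_sum, mul_left_comm]

lemma exists_annihilator {ι : Type*} [Fintype ι]
    (hna : ∃ a b : G, a * b ≠ b * a)
    (dd : ι → ℕ) (ρ : ∀ i : ι, G →* Matrix (Fin (dd i)) (Fin (dd i)) ℂ)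
    (hirr : ∀ i, MatRepIrreducible (ρ i))
    (hinequiv : ∀ i j, i ≠ j → ¬ MatRepEquiv (ρ i) (ρ j))
    (γc : G → ℂ) :
    ∃ f : G → ℂ, f ≠ 0 ∧ ∀ ℓ : ℕ, 1 ≤ ℓ →
      ∑ s : G, f s * (∑ i, (dd i : ℂ) *
        Matrix.trace ((matFT γc (ρ i)) ^ ℓ * ρ i s)) = 0 := by
  classical
  by_cases hone : ∀ i, dd i = 1
  · -- all representations are one-dimensional: use a nontrivial commutator
    obtain ⟨a, b, hab⟩ := hna
    set c : G := (a * b) * (b * a)⁻¹ with hc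
    have hc1 : c ≠ 1 := by
      intro h
      exact hab (mul_inv_eq_one.mp h)
    have hcomm : ∀ i (A B : Matrix (Fin (dd i)) (Fin (dd i)) ℂ), A * B = B * A := by
      intro i A B
      haveI : Subsingleton (Fin (dd i)) := by rw [hone i]; infer_instance
      ext p q
      rw [Matrix.mul_apply, Matrix.mul_apply]
      refine Finset.sum_congr rfl (fun k _ => ?_)
      rw [Subsingleton.elim p k, Subsingleton.elim q k, mul_comm]
    have hρc : ∀ i, ρ i c = 1 := by
      intro i
      have h1 : ρ i (a * b) = ρ i (b * a) := by
        rw [_root_.map_mul, _root_.map_mul, hcomm]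
      rw [hc, _root_.map_mul, h1, ← _root_.map_mul, mul_inv_cancel, _root_.map_one]
    refine ⟨(fun s => if s = 1 then 1 else 0) - (fun s => if s = c then 1 else 0), ?_, ?_⟩
    · intro h
      have := congrFun h 1
      simp [hc1, Ne.symm hc1] at this
    · intro ℓ hℓ
      have hFc : (∑ i, (dd i : ℂ) * Matrix.trace ((matFT γc (ρ i)) ^ ℓ * ρ i c))
          = ∑ i, (dd i : ℂ) * Matrix.trace ((matFT γc (ρ i)) ^ ℓ * ρ i 1) := by
        refine Finset.sum_congr rfl (fun i _ => ?_)
        rw [hρc i, _root_.map_one]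
      simp only [Pi.sub_apply, sub_mul, Finset.sum_sub_distrib, ite_mul, one_mul, zero_mul]
      rw [Finset.sum_ite_eq' Finset.univ (1 : G), Finset.sum_ite_eq' Finset.univ c]
      simp only [Finset.mem_univ, if_true]
      rw [hFc, sub_self]
  · -- some representation has dimension ≥ 2
    push_neg at hone
    obtain ⟨i0, hi0⟩ := hone
    have h2le : 2 ≤ dd i0 := by
      have := (hirr i0).1
      omega
    set A : ∀ i, Matrix (Fin (dd i)) (Fin (dd i)) ℂ := fun i => matFT γc (ρ i) with hA
    set p : Polynomial ℂ := ∏ i, (A i).charpoly with hpdef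
    have hm : p.Monic := Polynomial.monic_prod_of_monic _ _ (fun i _ => (A i).charpoly_monic)
    have hdeg : p.natDegree = ∑ i, dd i := by
      rw [hpdef, Polynomial.natDegree_prod_of_monic _ _ (fun i _ => (A i).charpoly_monic)]
      refine Finset.sum_congr rfl (fun i _ => ?_)
      rw [Matrix.charpoly_natDegree_eq_dim, Fintype.card_fin]
    have hp : Polynomial.aeval A p = 0 := by
      funext i
      have h1 : Polynomial.aeval (A i) p = (Polynomial.aeval A p) i :=
        Polynomial.aeval_algHom_apply (Pi.evalAlgHom ℂ _ i) A p
      rw [← h1, hpdef, ← Finset.mul_prod_erase Finset.univ _ (Finset.mem_univ i),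
        _root_.map_mul, Matrix.aeval_self_charpoly, zero_mul]
      rfl
    set D : ℕ := p.natDegree with hDdef
    have hD1 : 1 ≤ D := by
      rw [hdeg]
      calc 1 ≤ dd i0 := by omega
      _ ≤ ∑ i, dd i := Finset.single_le_sum (fun i _ => Nat.zero_le _) (Finset.mem_univ i0)
    -- the span of the Fourier data of powers
    set FF : ℕ → (G → ℂ) := fun k => PhiMap dd ρ (A ^ k) with hFF
    set W : Submodule ℂ (G → ℂ) := Submodule.span ℂ ((fun k => FF k) '' (Set.Icc 1 D)) with hW
    have hmem : ∀ ℓ : ℕ, 1 ≤ ℓ → FF ℓ ∈ W := by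
      intro ℓ hℓ
      have h1 := pow_mem_span_pow A p hm hp hD1 ℓ hℓ
      have h2 : FF ℓ ∈ Submodule.map (PhiMap dd ρ)
          (Submodule.span ℂ ((fun k => A ^ k) '' (Set.Icc 1 D))) :=
        Submodule.mem_map_of_mem h1
      rw [Submodule.map_span, ← Set.image_comp] at h2
      exact h2
    -- dimension bound
    have hinj : Function.Injective (PhiMap dd ρ) := by
      rw [injective_iff_map_eq_zero]
      intro M hM0
      refine phi_inj dd ρ hirr hinequiv M (fun s => ?_)
      exact congrFun hM0 s
    have hsumsq : ∑ i, dd i * dd i ≤ Fintype.card G := by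
      have h1 := LinearMap.finrank_le_finrank_of_injective hinj
      rw [Module.finrank_fintype_fun_eq_card] at h1
      rw [Module.finrank_pi_fintype] at h1
      have h2 : ∀ i : ι, Module.finrank ℂ (Matrix (Fin (dd i)) (Fin (dd i)) ℂ)
          = dd i * dd i := by
        intro i
        rw [Module.finrank_matrix, Fintype.card_fin, Module.finrank_self, mul_one]
      rw [Finset.sum_congr rfl (fun i _ => h2 i)] at h1
      exact h1
    have hDlt : D < Fintype.card G := by
      have hstrict : ∑ i, dd i < ∑ i, dd i * dd i := by
        refine Finset.sum_lt_sum (fun i _ => ?_) ⟨i0, Finset.mem_univ i0, ?_⟩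
        · rcases Nat.eq_zero_or_pos (dd i) with h | h
          · simp [h]
          · exact Nat.le_mul_of_pos_left _ h
        · nlinarith
      rw [hdeg]
      exact lt_of_lt_of_le hstrict hsumsq
    have hrank : Module.finrank ℂ W ≤ D := by
      have hWs : W = Submodule.span ℂ (↑((Finset.Icc 1 D).image FF) : Set (G → ℂ)) := by
        rw [Finset.coe_image, Finset.coe_Icc]
      rw [hWs]
      calc Module.finrank ℂ (Submodule.span ℂ (↑((Finset.Icc 1 D).image FF) : Set (G → ℂ)))
          ≤ ((Finset.Icc 1 D).image FF).card := finrank_span_finset_le_card _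
        _ ≤ (Finset.Icc 1 D).card := Finset.card_image_le
        _ = D := by rw [Nat.card_Icc]; omega
    have hWne : W ≠ ⊤ := by
      intro h
      rw [h, finrank_top, Module.finrank_fintype_fun_eq_card] at hrank
      omega
    obtain ⟨φ, hφ0, hφW⟩ := Submodule.exists_dual_map_eq_bot_of_lt_top
      (lt_top_iff_ne_top.mpr hWne) inferInstance
    refine ⟨fun s => φ (fun j => if s = j then 1 else 0), ?_, ?_⟩
    · intro h
      apply hφ0
      apply LinearMap.ext
      intro g
      have hg : φ g = ∑ s : G, g s * φ (fun j => if s = j then 1 else 0) := by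
        conv_lhs => rw [pi_eq_sum_univ g]
        rw [map_sum]
        refine Finset.sum_congr rfl (fun s _ => ?_)
        rw [_root_.map_smul, smul_eq_mul]
      rw [hg]
      simp only [LinearMap.zero_apply]
      rw [Finset.sum_eq_zero]
      intro s _
      rw [congrFun h s]
      simp
    · intro ℓ hℓ
      have hFℓ : (fun s => ∑ i, (dd i : ℂ) *
          Matrix.trace ((matFT γc (ρ i)) ^ ℓ * ρ i s)) = FF ℓ := by
        funext s
        rw [hFF]
        simp only [PhiMap, LinearMap.coe_mk, AddHom.coe_mk]
        refine Finset.sum_congr rfl (fun i _ => ?_)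
        rw [Pi.pow_apply]
      have hφF : φ (FF ℓ) = 0 := by
        have h1 : φ (FF ℓ) ∈ W.map φ := Submodule.mem_map_of_mem (hmem ℓ hℓ)
        rw [hφW] at h1
        exact h1
      have hg : φ (FF ℓ) = ∑ s : G, (FF ℓ) s * φ (fun j => if s = j then 1 else 0) := by
        conv_lhs => rw [pi_eq_sum_univ (FF ℓ)]
        rw [map_sum]
        refine Finset.sum_congr rfl (fun s _ => ?_)
        rw [_root_.map_smul, smul_eq_mul]
      calc ∑ s : G, (fun s => φ (fun j => if s = j then 1 else 0)) s *
            (∑ i, (dd i : ℂ) * Matrix.trace ((matFT γc (ρ i)) ^ ℓ * ρ i s))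
          = ∑ s : G, (FF ℓ) s * φ (fun j => if s = j then 1 else 0) := by
            refine Finset.sum_congr rfl (fun s _ => ?_)
            rw [mul_comm, ← congrFun hFℓ s]
        _ = 0 := by rw [← hg, hφF]

end Schur

lemma prod_sum_pi {κ : Type*} [Fintype κ] [DecidableEq κ] {α : κ → Type*}
    [∀ i, Fintype (α i)] (g : ∀ i, α i → ℂ) :
    ∏ i, ∑ j, g i j = ∑ x : ∀ i, α i, ∏ i, g i (x i) := by
  rw [Finset.prod_univ_sum]
  rw [Fintype.piFinset_univ]

lemma trace_kronPi_mul {κ : Type*} [Fintype κ] [DecidableEq κ] {d : κ → ℕ}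
    (M N : ∀ i, Matrix (Fin (d i)) (Fin (d i)) ℂ) :
    Matrix.trace (kronPi M * kronPi N) = ∏ i, Matrix.trace (M i * N i) := by
  have hrhs : ∏ i, Matrix.trace (M i * N i)
      = ∑ a : ∀ i, Fin (d i), ∑ b : ∀ i, Fin (d i),
          ∏ i, (M i (a i) (b i) * N i (b i) (a i)) := by
    have h1 : ∀ i, Matrix.trace (M i * N i)
        = ∑ p : Fin (d i), ∑ q : Fin (d i), M i p q * N i q p := by
      intro i
      rw [Matrix.trace]
      simp [Matrix.mul_apply, Matrix.diag_apply]
    rw [Finset.prod_congr rfl (fun i _ => h1 i), prod_sum_pi]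
    refine Finset.sum_congr rfl (fun a _ => ?_)
    exact prod_sum_pi _
  rw [hrhs, Matrix.trace]
  simp only [Matrix.diag_apply, Matrix.mul_apply, kronPi]
  refine Finset.sum_congr rfl (fun a _ => ?_)
  refine Finset.sum_congr rfl (fun b _ => ?_)
  rw [Finset.prod_mul_distrib]

/-- Theorem 2 of the paper: if `G` is a finite non-abelian group
of order `n`, then for any probability distribution `γ` on `G` there is a
function `Jₙ : Gⁿ → ℂ`, not identically zero, with
`∑ d_{ρ₁}⋯d_{ρₙ} Tr((γ̂(ρ₁)^{ℓ₁} ⊗ ⋯ ⊗ γ̂(ρₙ)^{ℓₙ}) Ĵₙ(ρ₁ ⊗ ⋯ ⊗ ρₙ)) = 0`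
for all positive integers `ℓ₁,…,ℓₙ`, the sum being over all `n`-tuples of
irreducible representations of `G` up to equivalence. -/
theorem no_reconstructive_condition_nonabelian {G : Type*} [Group G] [Fintype G]
    (hna : ∃ a b : G, a * b ≠ b * a)
    (γ : G → ℝ) (hγ : ∀ s, 0 ≤ γ s) (hγsum : ∑ s : G, γ s = 1)
    {ι : Type*} [Fintype ι] (dd : ι → ℕ)
    (ρ : ∀ i : ι, G →* Matrix (Fin (dd i)) (Fin (dd i)) ℂ)
    (hirr : ∀ i, MatRepIrreducible (ρ i))
    (hinequiv : ∀ i j, i ≠ j → ¬ MatRepEquiv (ρ i) (ρ j))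
    (hcomplete : ∀ (m : ℕ) (σ : G →* Matrix (Fin m) (Fin m) ℂ),
      MatRepIrreducible σ → ∃ i, MatRepEquiv σ (ρ i)) :
    ∃ J : (Fin (Fintype.card G) → G) → ℂ, J ≠ 0 ∧
      ∀ ℓ : Fin (Fintype.card G) → ℕ, (∀ i, 1 ≤ ℓ i) →
        ∑ c : Fin (Fintype.card G) → ι, (∏ i, (dd (c i) : ℂ)) *
          Matrix.trace
            (kronPi (fun i => (matFT (fun s => (γ s : ℂ)) (ρ (c i))) ^ (ℓ i)) *
              ∑ x : Fin (Fintype.card G) → G, J x • kronPi (fun i => ρ (c i) (x i)))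
          = 0 := by
  classical
  set n := Fintype.card G with hn
  set γc : G → ℂ := fun s => (γ s : ℂ) with hγc
  obtain ⟨f, hf0, hforth⟩ := exists_annihilator hna dd ρ hirr hinequiv γc
  set F : ℕ → G → ℂ := fun ℓ s => ∑ i, (dd i : ℂ) *
    Matrix.trace ((matFT γc (ρ i)) ^ ℓ * ρ i s) with hF
  refine ⟨fun x => ∏ i, f (x i), ?_, ?_⟩
  · obtain ⟨s0, hs0⟩ := Function.ne_iff.mp hf0
    intro h
    have h1 := congrFun h (fun _ => s0)
    simp only [Pi.zero_apply] at h1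
    rw [Finset.prod_const, Finset.card_univ, Fintype.card_fin] at h1
    exact pow_ne_zero n hs0 h1
  · intro ℓ hℓ
    have step1 : ∀ c : Fin n → ι,
        Matrix.trace (kronPi (fun i => (matFT γc (ρ (c i))) ^ (ℓ i)) *
          ∑ x : Fin n → G, (∏ i, f (x i)) • kronPi (fun i => ρ (c i) (x i)))
        = ∑ x : Fin n → G, (∏ i, f (x i)) *
            ∏ i, Matrix.trace ((matFT γc (ρ (c i))) ^ (ℓ i) * ρ (c i) (x i)) := by
      intro c
      rw [Matrix.mul_sum]
      simp only [Matrix.mul_smul]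
      rw [Matrix.trace_sum]
      refine Finset.sum_congr rfl (fun x _ => ?_)
      rw [Matrix.trace_smul, smul_eq_mul, trace_kronPi_mul]
    calc ∑ c : Fin n → ι, (∏ i, (dd (c i) : ℂ)) *
          Matrix.trace (kronPi (fun i => (matFT γc (ρ (c i))) ^ (ℓ i)) *
            ∑ x : Fin n → G, (∏ i, f (x i)) • kronPi (fun i => ρ (c i) (x i)))
        = ∑ c : Fin n → ι, ∑ x : Fin n → G, (∏ i, f (x i)) *
            ∏ i, ((dd (c i) : ℂ) *
              Matrix.trace ((matFT γc (ρ (c i))) ^ (ℓ i) * ρ (c i) (x i))) := by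
          refine Finset.sum_congr rfl (fun c _ => ?_)
          rw [step1 c, Finset.mul_sum]
          refine Finset.sum_congr rfl (fun x _ => ?_)
          rw [Finset.prod_mul_distrib]
          ring
      _ = ∑ x : Fin n → G, (∏ i, f (x i)) * ∏ i, F (ℓ i) (x i) := by
          rw [Finset.sum_comm]
          refine Finset.sum_congr rfl (fun x _ => ?_)
          rw [← Finset.mul_sum]
          congr 1
          rw [← prod_sum_pi (fun i κi => (dd κi : ℂ) *
            Matrix.trace ((matFT γc (ρ κi)) ^ (ℓ i) * ρ κi (x i)))]
      _ = ∏ i : Fin n, ∑ s : G, f s * F (ℓ i) s := by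
          rw [prod_sum_pi (fun i s => f s * F (ℓ i) s)]
          refine Finset.sum_congr rfl (fun x _ => ?_)
          rw [Finset.prod_mul_distrib]
      _ = 0 := by
          haveI : Nonempty (Fin n) := by
            rw [hn]
            exact Fin.pos_iff_nonempty.mp Fintype.card_pos
          refine Finset.prod_eq_zero (Finset.mem_univ (Classical.arbitrary (Fin n))) ?_
          exact hforth _ (hℓ _)
end
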